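/- Let Ω be a topological space equipped with a continuous action of ℝⁿ, written (v, T) ↦ T − v. Let f : Ω → S¹ be continuous, let k ≥ 1 be an integer, let β : ℝⁿ → ℝ be a linear functional, and suppose there is a continuous eigenfunction g with eigenvalue β such that the pointwise power f^k is homotopic to g. Then there exists a continuous eigenfunction h with eigenvalue β/k such that h is homotopic to f. (This expresses that the cokernel of the map from eigenvalues to homotopy classes of circle-valued maps is torsion free.) -/

import Mathlib

open Complex Set
noncomputable section
namespace Stmt2Aux

def pt (m i : ℕ) : unitInterval := Set.projIcc 0 1 zero_le_one ((i : ℝ) / m)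

lemma coe_pt {m i : ℕ} (hm : 1 ≤ m) (hi : i ≤ m) : (pt m i : ℝ) = (i : ℝ) / m := by
  have hm' : (0:ℝ) < m := by exact_mod_cast hm
  have hmem : (i : ℝ) / m ∈ Set.Icc (0:ℝ) 1 := by
    constructor
    · positivity
    · rw [div_le_one hm']; exact_mod_cast hi
  rw [pt, Set.projIcc_of_mem _ hmem]

lemma pt_zero {m : ℕ} (hm : 1 ≤ m) : pt m 0 = 0 := by
  ext; rw [coe_pt hm (Nat.zero_le _)]; simp

lemma pt_last {m : ℕ} (hm : 1 ≤ m) : pt m m = 1 := by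
  have hm' : (m:ℝ) ≠ 0 := by positivity
  ext; rw [coe_pt hm le_rfl]; simp [div_self hm']

def inc (γ : C(unitInterval, Circle)) (s t : unitInterval) : ℂ := (γ t * (γ s)⁻¹ : Circle)

def S (m : ℕ) (γ : C(unitInterval, Circle)) : ℝ :=
  ∑ i ∈ Finset.range m, Complex.arg (inc γ (pt m i) (pt m (i+1)))

def Fine (m : ℕ) (γ : C(unitInterval, Circle)) : Prop :=
  ∀ s t : unitInterval, |(t:ℝ) - s| ≤ 1/m → 0 < (inc γ s t).re

lemma exp_sum {α : Type*} (s : Finset α) (f : α → ℝ) :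
    Circle.exp (∑ i ∈ s, f i) = ∏ i ∈ s, Circle.exp (f i) := by
  classical
  induction s using Finset.cons_induction with
  | empty => simp [Circle.exp_zero]
  | cons a s ha ih => rw [Finset.sum_cons, Finset.prod_cons, Circle.exp_add, ih]

lemma exp_S {m : ℕ} (hm : 1 ≤ m) (γ : C(unitInterval, Circle)) :
    Circle.exp (S m γ) = γ 1 * (γ 0)⁻¹ := by
  rw [S, exp_sum]
  have : ∀ i, Circle.exp (Complex.arg (inc γ (pt m i) (pt m (i+1))))
      = γ (pt m (i+1)) / γ (pt m i) := by
    intro i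
    rw [div_eq_mul_inv]
    exact Circle.exp_arg _
  simp_rw [this]
  rw [Finset.prod_range_div (fun i => γ (pt m i)) m, pt_zero hm, pt_last hm, div_eq_mul_inv]

lemma ne_zero_of_re_pos {z : ℂ} (h : 0 < z.re) : z ≠ 0 := by
  intro hz; rw [hz] at h; simp at h

lemma arg_mul_of_re_pos {z w : ℂ} (hz : 0 < z.re) (hw : 0 < w.re) :
    Complex.arg (z * w) = Complex.arg z + Complex.arg w := by
  have h1 : |Complex.arg z| < Real.pi / 2 :=
    Complex.abs_arg_lt_pi_div_two_iff.mpr (Or.inl hz)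
  have h2 : |Complex.arg w| < Real.pi / 2 :=
    Complex.abs_arg_lt_pi_div_two_iff.mpr (Or.inl hw)
  rw [abs_lt] at h1 h2
  exact Complex.arg_mul (ne_zero_of_re_pos hz) (ne_zero_of_re_pos hw)
    ⟨by linarith [h1.1, h2.1], by linarith [h1.2, h2.2, Real.pi_pos]⟩

lemma arg_prod (u : ℕ → Circle) (N : ℕ)
    (h0 : ∀ l ≤ N, 0 < ((u l * (u 0)⁻¹ : Circle) : ℂ).re)
    (h1 : ∀ l < N, 0 < ((u (l+1) * (u l)⁻¹ : Circle) : ℂ).re) :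
    Complex.arg ((u N * (u 0)⁻¹ : Circle) : ℂ)
      = ∑ l ∈ Finset.range N, Complex.arg ((u (l+1) * (u l)⁻¹ : Circle) : ℂ) := by
  induction N with
  | zero => simp
  | succ N ih =>
    have hA : 0 < ((u N * (u 0)⁻¹ : Circle) : ℂ).re := h0 N (Nat.le_succ N)
    have ha : 0 < ((u (N+1) * (u N)⁻¹ : Circle) : ℂ).re := h1 N (Nat.lt_succ_self N)
    have hsplit : (u (N+1) * (u 0)⁻¹ : Circle) = (u (N+1) * (u N)⁻¹) * (u N * (u 0)⁻¹) := by
      group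
    rw [Finset.sum_range_succ, ← ih (fun l hl => h0 l (hl.trans (Nat.le_succ N)))
      (fun l hl => h1 l (hl.trans (Nat.lt_succ_self N)))]
    rw [hsplit, Circle.coe_mul, arg_mul_of_re_pos ha hA, add_comm]

lemma fine_pair {γ : C(unitInterval, Circle)} {m j : ℕ} (hm : 1 ≤ m) (hj : 1 ≤ j)
    (hf : Fine m γ) {i₁ i₂ : ℕ} (h12 : i₁ ≤ i₂) (hgap : i₂ - i₁ ≤ j) (h2 : i₂ ≤ m * j) :
    0 < (inc γ (pt (m*j) i₁) (pt (m*j) i₂)).re := by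
  have hmj : 1 ≤ m * j := Nat.one_le_iff_ne_zero.mpr (by positivity)
  apply hf
  rw [coe_pt hmj h2, coe_pt hmj (h12.trans h2)]
  have hmj' : (0:ℝ) < (m*j : ℕ) := by exact_mod_cast hmj
  rw [div_sub_div_same, abs_div, _root_.abs_of_nonneg (le_of_lt hmj'),
    div_le_div_iff₀ hmj' (by exact_mod_cast hm : (0:ℝ) < m)]
  have h1 : |(i₂ : ℝ) - i₁| = ((i₂ - i₁ : ℕ) : ℝ) := by
    rw [Nat.cast_sub h12, _root_.abs_of_nonneg (a := (i₂:ℝ) - i₁) (by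
      have : (i₁:ℝ) ≤ i₂ := by exact_mod_cast h12
      linarith)]
  rw [h1]
  calc ((i₂ - i₁ : ℕ) : ℝ) * m ≤ (j : ℝ) * m := by
        apply mul_le_mul_of_nonneg_right _ (by positivity)
        exact_mod_cast hgap
    _ = 1 * (m*j : ℕ) := by push_cast; ring

lemma S_mul (γ : C(unitInterval, Circle)) {m j : ℕ} (hm : 1 ≤ m) (hj : 1 ≤ j)
    (hf : Fine m γ) : S (m*j) γ = S m γ := by
  have hmj : 1 ≤ m * j := Nat.one_le_iff_ne_zero.mpr (by positivity)
  have coincide : ∀ p ≤ m, pt (m*j) (p*j) = pt m p := by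
    intro p hp
    ext
    rw [coe_pt hmj (Nat.mul_le_mul_right j hp), coe_pt hm hp]
    have hj' : (0:ℝ) < j := by exact_mod_cast hj
    have hm' : (0:ℝ) < m := by exact_mod_cast hm
    field_simp
    push_cast; ring
  -- main claim by induction
  have main : ∀ M ≤ m, ∑ i ∈ Finset.range (M*j),
      Complex.arg (inc γ (pt (m*j) i) (pt (m*j) (i+1)))
      = ∑ p ∈ Finset.range M, Complex.arg (inc γ (pt m p) (pt m (p+1))) := by
    intro M
    induction M with
    | zero => simp
    | succ M ih =>
      intro hM
      have hM' : M ≤ m := (Nat.le_succ M).trans hM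
      rw [Nat.succ_mul, Finset.sum_range_add, ih hM', Finset.sum_range_succ]
      congr 1
      -- block computation
      set u : ℕ → Circle := fun l => γ (pt (m*j) (M*j + l)) with hu
      have hbnd : ∀ l ≤ j, M*j + l ≤ m*j := by
        intro l hl
        calc M*j + l ≤ M*j + j := by omega
          _ = (M+1)*j := by ring
          _ ≤ m*j := Nat.mul_le_mul_right j hM
      have h0 : ∀ l ≤ j, 0 < ((u l * (u 0)⁻¹ : Circle) : ℂ).re := by
        intro l hl
        have := fine_pair hm hj hf (by omega : M*j + 0 ≤ M*j + l) (by omega) (hbnd l hl)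
        simpa [inc, hu] using this
      have h1 : ∀ l < j, 0 < ((u (l+1) * (u l)⁻¹ : Circle) : ℂ).re := by
        intro l hl
        have := fine_pair hm hj hf (by omega : M*j + l ≤ M*j + (l+1)) (by omega)
          (hbnd (l+1) (by omega))
        simpa [inc, hu] using this
      have key := arg_prod u j h0 h1
      have e1 : u j = γ (pt m (M+1)) := by
        show γ (pt (m*j) (M*j + j)) = _
        have h : M*j + j = (M+1)*j := by ring
        rw [h, coincide (M+1) hM]
      have e2 : u 0 = γ (pt m M) := by
        show γ (pt (m*j) (M*j + 0)) = _
        rw [Nat.add_zero, coincide M hM']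
      have e3 : ∀ l, u (l+1) = γ (pt (m*j) (M*j + l + 1)) := by
        intro l
        show γ (pt (m*j) (M*j + (l+1))) = _
        rw [← Nat.add_assoc]
      calc ∑ l ∈ Finset.range j,
            Complex.arg (inc γ (pt (m*j) (M*j + l)) (pt (m*j) (M*j + l + 1)))
          = ∑ l ∈ Finset.range j, Complex.arg ((u (l+1) * (u l)⁻¹ : Circle) : ℂ) := by
            apply Finset.sum_congr rfl
            intro l _
            rw [inc, e3 l, hu]
        _ = Complex.arg ((u j * (u 0)⁻¹ : Circle) : ℂ) := key.symm
        _ = Complex.arg (inc γ (pt m M) (pt m (M+1))) := by rw [e1, e2, inc]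
  rw [S, S, main m le_rfl]

lemma S_eq (γ : C(unitInterval, Circle)) {m m' : ℕ} (hm : 1 ≤ m) (hm' : 1 ≤ m')
    (hf : Fine m γ) (hf' : Fine m' γ) : S m γ = S m' γ := by
  rw [← S_mul γ hm hm' hf, ← S_mul γ hm' hm hf', Nat.mul_comm]

lemma re_pos_of_dist_lt {z w : Circle} (h : dist (z:ℂ) (w:ℂ) < 1) :
    0 < ((z * w⁻¹ : Circle) : ℂ).re := by
  rw [Circle.coe_mul, Circle.coe_inv_eq_conj]
  have hz : (z:ℂ).re^2 + (z:ℂ).im^2 = 1 := by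
    have h1 : ‖(z:ℂ)‖ = 1 := Circle.norm_coe z
    have := Complex.sq_norm (z:ℂ)
    rw [h1, Complex.normSq_apply] at this
    nlinarith [this]
  have hw : (w:ℂ).re^2 + (w:ℂ).im^2 = 1 := by
    have h1 : ‖(w:ℂ)‖ = 1 := Circle.norm_coe w
    have := Complex.sq_norm (w:ℂ)
    rw [h1, Complex.normSq_apply] at this
    nlinarith [this]
  have hd : ((z:ℂ).re - (w:ℂ).re)^2 + ((z:ℂ).im - (w:ℂ).im)^2 < 1 := by
    have h1 : dist (z:ℂ) (w:ℂ) ^ 2 < 1 := by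
      nlinarith [dist_nonneg (x := (z:ℂ)) (y := (w:ℂ))]
    rw [Complex.dist_eq, Complex.sq_norm, Complex.normSq_apply] at h1
    simp only [Complex.sub_re, Complex.sub_im] at h1
    nlinarith [h1]
  rw [Complex.mul_re, Complex.conj_re, Complex.conj_im]
  nlinarith [hz, hw, hd]

lemma exists_fine_nbhd (γ₀ : C(unitInterval, Circle)) :
    ∃ m, 1 ≤ m ∧ ∃ U : Set C(unitInterval, Circle),
      IsOpen U ∧ γ₀ ∈ U ∧ ∀ γ ∈ U, Fine m γ := by
  have huc : UniformContinuous γ₀ := CompactSpace.uniformContinuous_of_continuous γ₀.continuous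
  replace huc := Metric.uniformContinuous_iff.mp huc
  obtain ⟨δ, hδ, hδ'⟩ := huc (1/4) (by norm_num)
  obtain ⟨m0, hm0⟩ := exists_nat_one_div_lt hδ
  refine ⟨m0+1, by omega, Metric.ball γ₀ (1/4), Metric.isOpen_ball,
    Metric.mem_ball_self (by norm_num), ?_⟩
  intro γ hγ s t hst
  apply re_pos_of_dist_lt
  have h1 : dist (γ t) (γ₀ t) ≤ dist γ γ₀ := ContinuousMap.dist_apply_le_dist t
  have h2 : dist (γ₀ s) (γ s) ≤ dist γ₀ γ := ContinuousMap.dist_apply_le_dist s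
  have h3 : dist (γ₀ t) (γ₀ s) < 1/4 := by
    apply hδ'
    rw [Subtype.dist_eq, Real.dist_eq]
    calc |(t:ℝ) - s| ≤ 1/(m0+1 : ℕ) := hst
      _ < δ := by exact_mod_cast hm0
  have hγγ₀ : dist γ γ₀ < 1/4 := hγ
  have hd : dist (γ t) (γ s) < 1 := by
    calc dist (γ t) (γ s) ≤ dist (γ t) (γ₀ t) + dist (γ₀ t) (γ₀ s) + dist (γ₀ s) (γ s) :=
          dist_triangle4 _ _ _ _
      _ < 1/4 + 1/4 + 1/4 := by
          have h4 : dist (γ₀ s) (γ s) < 1/4 := by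
            calc dist (γ₀ s) (γ s) ≤ dist γ₀ γ := h2
              _ = dist γ γ₀ := dist_comm _ _
              _ < 1/4 := hγγ₀
          have h5 : dist (γ t) (γ₀ t) < 1/4 := h1.trans_lt hγγ₀
          linarith
      _ < 1 := by norm_num
  exact hd


lemma exists_fine (γ : C(unitInterval, Circle)) : ∃ m, 1 ≤ m ∧ Fine m γ := by
  obtain ⟨m, hm, U, _, hγ, hfine⟩ := exists_fine_nbhd γ
  exact ⟨m, hm, hfine γ hγ⟩

def W (γ : C(unitInterval, Circle)) : ℝ := S (exists_fine γ).choose γ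

lemma exp_W (γ : C(unitInterval, Circle)) : Circle.exp (W γ) = γ 1 * (γ 0)⁻¹ :=
  exp_S (exists_fine γ).choose_spec.1 γ

lemma W_eq_of_fine {γ : C(unitInterval, Circle)} {m : ℕ} (hm : 1 ≤ m) (hf : Fine m γ) :
    W γ = S m γ :=
  S_eq γ (exists_fine γ).choose_spec.1 hm (exists_fine γ).choose_spec.2 hf

lemma continuousAt_S {m : ℕ} (hm : 1 ≤ m) {γ₀ : C(unitInterval, Circle)} (hf : Fine m γ₀) :
    ContinuousAt (S m) γ₀ := by
  have : ∀ i ∈ Finset.range m, ContinuousAt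
      (fun γ : C(unitInterval, Circle) => Complex.arg (inc γ (pt m i) (pt m (i+1)))) γ₀ := by
    intro i hi
    rw [Finset.mem_range] at hi
    have hcont : Continuous fun γ : C(unitInterval, Circle) => inc γ (pt m i) (pt m (i+1)) := by
      apply continuous_subtype_val.comp
      have c1 : Continuous fun γ : C(unitInterval, Circle) => γ (pt m (i+1)) :=
        continuous_eval_const _
      have c2 : Continuous fun γ : C(unitInterval, Circle) => γ (pt m i) :=
        continuous_eval_const _
      exact c1.mul c2.inv
    have hdist : |((pt m (i+1) : ℝ)) - (pt m i : ℝ)| ≤ 1/m := by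
      rw [coe_pt hm hi, coe_pt hm (le_of_lt hi)]
      have hm' : (0:ℝ) < m := by exact_mod_cast hm
      rw [div_sub_div_same]
      have : ((i:ℝ) + 1) - i = 1 := by ring
      push_cast
      rw [this, abs_div, _root_.abs_of_nonneg (le_of_lt hm'), abs_one]
    have hsp : inc γ₀ (pt m i) (pt m (i+1)) ∈ Complex.slitPlane :=
      Complex.mem_slitPlane_iff.mpr (Or.inl (hf _ _ hdist))
    exact ContinuousAt.comp (x := γ₀) (g := Complex.arg)
      (f := fun γ : C(unitInterval, Circle) => inc γ (pt m i) (pt m (i+1)))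
      (Complex.continuousAt_arg hsp) hcont.continuousAt
  unfold S
  exact tendsto_finset_sum _ this

lemma continuous_W : Continuous W := by
  rw [continuous_iff_continuousAt]
  intro γ₀
  obtain ⟨m, hm, U, hUo, hγ₀, hfine⟩ := exists_fine_nbhd γ₀
  have heq : ∀ γ ∈ U, S m γ = W γ := fun γ hγ => (W_eq_of_fine hm (hfine γ hγ)).symm
  exact (continuousAt_S hm (hfine γ₀ hγ₀)).congr
    (Filter.eventually_of_mem (hUo.mem_nhds hγ₀) heq)

lemma exp_nsmul' (r : ℝ) (k : ℕ) : Circle.exp r ^ k = Circle.exp (k * r) := by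
  induction k with
  | zero => simp [Circle.exp_zero]
  | succ k ih =>
    rw [pow_succ, ih, ← Circle.exp_add]
    congr 1
    push_cast
    ring

end Stmt2Aux



/-- Let `Ω` be a topological space with a continuous `ℝⁿ`-action `(v, T) ↦ T − v` (here `act v T`).
Let `f : Ω → S¹` be continuous, `k ≥ 1` an integer, `β : ℝⁿ → ℝ` a linear functional, and
suppose there is a continuous eigenfunction `g` with eigenvalue `β` such that the pointwise
power `f^k` is homotopic to `g`.  Then there exists a continuous eigenfunction `h` with
eigenvalue `β/k` such that `h` is homotopic to `f`.  (Torsion freeness of the cokernel of the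
map from eigenvalues to homotopy classes of circle-valued maps.) -/
theorem stmt2 {Ω : Type*} [TopologicalSpace Ω] (n : ℕ)
    (act : (Fin n → ℝ) → Ω → Ω)
    (hact_cont : Continuous fun p : (Fin n → ℝ) × Ω => act p.1 p.2)
    (hact_zero : ∀ T, act 0 T = T)
    (hact_add : ∀ v w T, act (v + w) T = act v (act w T))
    (β : (Fin n → ℝ) →ₗ[ℝ] ℝ) (k : ℕ) (hk : 1 ≤ k)
    (f g : C(Ω, Circle))
    (hg : ∀ (T : Ω) (v : Fin n → ℝ),
      (g (act v T) : ℂ) = Complex.exp (2 * Real.pi * Complex.I * (β v : ℝ)) * (g T : ℂ))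
    (hfg : ContinuousMap.Homotopic ⟨fun x => f x ^ k, (map_continuous f).pow k⟩ g) :
    ∃ h : C(Ω, Circle),
      (∀ (T : Ω) (v : Fin n → ℝ),
        (h (act v T) : ℂ) =
          Complex.exp (2 * Real.pi * Complex.I * ((β v : ℝ) / (k : ℝ))) * (h T : ℂ)) ∧
      h.Homotopic f := by
  classical
  obtain ⟨H⟩ := hfg
  set cH : C(Ω, C(unitInterval, Circle)) :=
    ContinuousMap.curry ⟨fun p => H (p.2, p.1),
      H.continuous.comp (continuous_snd.prodMk continuous_fst)⟩ with hcH
  set φ : Ω → ℝ := fun x => Stmt2Aux.W (cH x) with hφ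
  have φcont : Continuous φ := Stmt2Aux.continuous_W.comp cH.continuous
  have φexp : ∀ x, Circle.exp (φ x) = g x * (f x ^ k)⁻¹ := by
    intro x
    have hW := Stmt2Aux.exp_W (cH x)
    have e1 : cH x 1 = g x := H.apply_one x
    have e0 : cH x 0 = f x ^ k := H.apply_zero x
    rw [hφ, hW, e1, e0]
  have hk0 : (k:ℝ) ≠ 0 := Nat.cast_ne_zero.mpr (by omega)
  set h0 : Ω → Circle := fun x => f x * Circle.exp (φ x / k) with hh0
  have h0cont : Continuous h0 :=
    (map_continuous f).mul ((map_continuous Circle.exp).comp (φcont.div_const k))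
  have hpow : ∀ x, h0 x ^ k = g x := by
    intro x
    calc h0 x ^ k = f x ^ k * Circle.exp (φ x / k) ^ k := mul_pow _ _ _
      _ = f x ^ k * Circle.exp ((k : ℝ) * (φ x / k)) := by rw [Stmt2Aux.exp_nsmul']
      _ = f x ^ k * Circle.exp (φ x) := by rw [mul_div_cancel₀ _ hk0]
      _ = f x ^ k * (g x * (f x ^ k)⁻¹) := by rw [φexp]
      _ = g x := by
          rw [mul_comm (g x) ((f x ^ k)⁻¹), ← mul_assoc, mul_inv_cancel, one_mul]
  refine ⟨⟨h0, h0cont⟩, ?_, ?_⟩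
  · intro T v
    set F : Set Circle := {z : Circle | (z:ℂ) ^ k = 1} with hF
    have hFfin : F.Finite := by
      have hp : (Polynomial.X ^ k - Polynomial.C (1:ℂ)) ≠ 0 :=
        Polynomial.X_pow_sub_C_ne_zero (by omega) 1
      have hS : {z : ℂ | z ^ k = 1}.Finite := by
        have h1 := Polynomial.finite_setOf_isRoot hp
        have h2 : {x : ℂ | (Polynomial.X ^ k - Polynomial.C (1:ℂ)).IsRoot x}
            = {z : ℂ | z ^ k = 1} := by
          ext z
          simp [Polynomial.IsRoot, sub_eq_zero]
        rwa [h2] at h1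
      exact hS.preimage (Set.injOn_of_injective Subtype.val_injective)
    haveI : Finite ↥F := hFfin.to_subtype
    set c : (Fin n → ℝ) → Circle := fun w =>
      h0 (act w T) * (h0 T)⁻¹ * (Circle.exp (2 * Real.pi * β w / k))⁻¹ with hc
    have hc_cont : Continuous c := by
      have hA : Continuous fun w : Fin n → ℝ => act w T :=
        hact_cont.comp (continuous_id.prodMk continuous_const)
      have hβ : Continuous fun w : Fin n → ℝ => (2 * Real.pi * β w / k) :=
        (continuous_const.mul β.continuous_of_finiteDimensional).div_const _
      exact ((h0cont.comp hA).mul continuous_const).mul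
        (((map_continuous Circle.exp).comp hβ).inv)
    have hexpk : ∀ r : ℝ, (Circle.exp (r / k)) ^ k = Circle.exp r := by
      intro r
      rw [Stmt2Aux.exp_nsmul', mul_div_cancel₀ _ hk0]
    have hck : ∀ w, c w ∈ F := by
      intro w
      have e3 : (c w)^k = g (act w T) * (g T)⁻¹ * (Circle.exp (2 * Real.pi * β w))⁻¹ := by
        rw [hc]
        simp only [mul_pow, inv_pow]
        rw [hpow, hpow, hexpk]
      show ((c w : Circle) : ℂ) ^ k = 1
      have : (((c w)^k : Circle) : ℂ) = 1 := by
        rw [e3, Circle.coe_mul, Circle.coe_mul, Circle.coe_inv, Circle.coe_inv, hg T w,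
          Circle.coe_exp]
        have harg : ((2*Real.pi*β w : ℝ):ℂ) * Complex.I = 2*Real.pi*Complex.I*(β w) := by
          push_cast; ring
        rw [harg]
        have hne : (g T : ℂ) ≠ 0 := Circle.coe_ne_zero _
        field_simp
      rw [← this, Circle.coe_pow]
    set cc : (Fin n → ℝ) → ↥F := fun w => ⟨c w, hck w⟩ with hcc
    have hlc : IsLocallyConstant cc :=
      (IsLocallyConstant.iff_continuous cc).mpr (hc_cont.subtype_mk hck)
    have hconst : cc v = cc 0 := hlc.apply_eq_of_preconnectedSpace v 0
    have hc0 : c 0 = 1 := by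
      rw [hc]
      simp [hact_zero T, map_zero β, Circle.exp_zero]
    have hcv : c v = 1 := by
      have := congrArg Subtype.val hconst
      simpa [hcc, hc0] using this
    have hmain : h0 (act v T) = Circle.exp (2 * Real.pi * β v / k) * h0 T := by
      have expand : c v * (Circle.exp (2 * Real.pi * β v / k) * h0 T) = h0 (act v T) := by
        rw [hc]; group
      rw [← expand, hcv, one_mul]
    show (h0 (act v T) : ℂ) = _
    rw [hmain, Circle.coe_mul, Circle.coe_exp]
    congr 1
    push_cast
    ring
  · constructor
    refine
      { toFun := fun p => f p.2 * Circle.exp ((1 - (p.1 : ℝ)) * (φ p.2 / k))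
        continuous_toFun := ?_
        map_zero_left := ?_
        map_one_left := ?_ }
    · exact ((map_continuous f).comp continuous_snd).mul
        ((map_continuous Circle.exp).comp
          ((continuous_const.sub (continuous_subtype_val.comp continuous_fst)).mul
            ((φcont.comp continuous_snd).div_const k)))
    · intro x
      show f x * Circle.exp ((1 - ((0 : unitInterval) : ℝ)) * (φ x / k)) = h0 x
      norm_num
      rfl
    · intro x
      show f x * Circle.exp ((1 - ((1 : unitInterval) : ℝ)) * (φ x / k)) = f x
      norm_num [Circle.exp_zero]
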